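/- arXiv:1601.06885 — 2 statements merged into one kernel-verified Lean document; each statement's English description precedes it below -/
import Mathlib

section
/- For every binary vector x and every ℓ ≥ 1, B_D(B_{T,ℓ}(x)) = B_{T,ℓ}(B_D(x)), where B_{T,ℓ} denotes the set of words obtainable by at most ℓ adjacent transpositions and B_D denotes the set obtainable by at most one deletion. -/
/-- The set of words obtained from `x` by deleting at most one symbol. -/
def delBall (x : List Bool) : Set (List Bool) :=
  insert x {y | ∃ i < x.length, y = x.eraseIdx i}

/-- The set of words obtained from `x` by at most one adjacent transposition. -/
def oneT (x : List Bool) : Set (List Bool) :=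
  insert x {y | ∃ (s t : List Bool) (a b : Bool),
    x = s ++ a :: b :: t ∧ y = s ++ b :: a :: t}

/-- The set of words obtained from `x` by at most `ℓ` adjacent transpositions. -/
def ballT : ℕ → List Bool → Set (List Bool)
  | 0, x => {x}
  | (ℓ + 1), x => ⋃ y ∈ ballT ℓ x, oneT y

lemma eraseIdx_mid (s t : List Bool) (c : Bool) :
    (s ++ c :: t).eraseIdx s.length = s ++ t := by
  induction s with
  | nil => simp
  | cons a s ih => simpa using ih

lemma mem_delBall {x y : List Bool} :
    y ∈ delBall x ↔ y = x ∨ ∃ s t, ∃ c : Bool, x = s ++ c :: t ∧ y = s ++ t := by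
  constructor
  · rintro (rfl | ⟨i, hi, rfl⟩)
    · exact Or.inl rfl
    · refine Or.inr ⟨x.take i, x.drop (i+1), x[i], ?_, ?_⟩
      · conv_lhs => rw [← List.take_append_drop i x, ← List.getElem_cons_drop hi]
      · rw [List.eraseIdx_eq_take_drop_succ]
  · rintro (rfl | ⟨s, t, c, rfl, rfl⟩)
    · exact Set.mem_insert _ _
    · exact Set.mem_insert_iff.mpr (Or.inr ⟨s.length, by simp, (eraseIdx_mid s t c).symm⟩)

lemma self_mem_delBall (x : List Bool) : x ∈ delBall x := Set.mem_insert _ _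

lemma del_mem_delBall (s t : List Bool) (c : Bool) : s ++ t ∈ delBall (s ++ c :: t) :=
  mem_delBall.mpr (Or.inr ⟨s, t, c, rfl, rfl⟩)

lemma oneT_self (x : List Bool) : x ∈ oneT x := Set.mem_insert _ _

lemma swap_mem_oneT (s t : List Bool) (a b : Bool) :
    s ++ b :: a :: t ∈ oneT (s ++ a :: b :: t) :=
  Set.mem_insert_iff.mpr (Or.inr ⟨s, t, a, b, rfl, rfl⟩)

lemma mem_oneT {x y : List Bool} :
    y ∈ oneT x ↔ y = x ∨ ∃ (s t : List Bool) (a b : Bool),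
      x = s ++ a :: b :: t ∧ y = s ++ b :: a :: t := Set.mem_insert_iff

/-- One-step forward commutation: a deletion after a transposition can be realized
as at most one transposition after a deletion. -/
lemma stepA {x z w : List Bool} (hz : z ∈ oneT x) (hw : w ∈ delBall z) :
    ∃ w', w' ∈ delBall x ∧ w ∈ oneT w' := by
  rcases mem_oneT.mp hz with rfl | ⟨s, t, a, b, rfl, rfl⟩
  · exact ⟨w, hw, oneT_self w⟩
  rcases mem_delBall.mp hw with rfl | ⟨p, q, c, hpq, rfl⟩
  · exact ⟨s ++ a :: b :: t, self_mem_delBall _, swap_mem_oneT s t a b⟩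
  rcases List.append_eq_append_iff.mp hpq with ⟨m, hp, hm⟩ | ⟨m, hs, hm⟩
  · subst hp
    match m, hm with
    | [], hm =>
      obtain ⟨rfl, rfl⟩ : b = c ∧ a :: t = q := by simpa using hm
      exact ⟨s ++ a :: t, by simpa using del_mem_delBall (s ++ [a]) t b,
        by simpa using oneT_self (s ++ a :: t)⟩
    | [c1], hm =>
      obtain ⟨rfl, rfl, rfl⟩ : b = c1 ∧ a = c ∧ t = q := by simpa using hm
      exact ⟨s ++ b :: t, del_mem_delBall s (b :: t) a,
        by simpa using oneT_self (s ++ b :: t)⟩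
    | c1 :: c2 :: m', hm =>
      obtain ⟨rfl, rfl, rfl⟩ : b = c1 ∧ a = c2 ∧ t = m' ++ c :: q := by simpa using hm
      exact ⟨s ++ a :: b :: (m' ++ q),
        by simpa using del_mem_delBall (s ++ a :: b :: m') q c,
        by simpa using swap_mem_oneT s (m' ++ q) a b⟩
  · subst hs
    match m, hm with
    | [], hm =>
      obtain ⟨rfl, rfl⟩ : c = b ∧ q = a :: t := by simpa using hm
      exact ⟨p ++ a :: t, by simpa using del_mem_delBall (p ++ [a]) t c,
        by simpa using oneT_self (p ++ a :: t)⟩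
    | c1 :: m', hm =>
      obtain ⟨rfl, rfl⟩ : c = c1 ∧ q = m' ++ b :: a :: t := by simpa using hm
      exact ⟨(p ++ m') ++ a :: b :: t,
        by simpa using del_mem_delBall p (m' ++ a :: b :: t) c,
        by simpa using swap_mem_oneT (p ++ m') t a b⟩

/-- One-step backward commutation (uses the binary alphabet): a transposition after a
deletion can be realized as a deletion after at most one transposition. -/
lemma stepB {x z w : List Bool} (hz : z ∈ delBall x) (hw : w ∈ oneT z) :
    ∃ u, u ∈ oneT x ∧ w ∈ delBall u := by
  rcases mem_delBall.mp hz with rfl | ⟨s, t, c, rfl, rfl⟩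
  · exact ⟨w, hw, self_mem_delBall w⟩
  rcases mem_oneT.mp hw with rfl | ⟨p, q, a, b, hpq, rfl⟩
  · exact ⟨s ++ c :: t, oneT_self _, del_mem_delBall s t c⟩
  rcases List.append_eq_append_iff.mp hpq with ⟨m, hp, hm⟩ | ⟨m, hs, hm⟩
  · subst hp hm
    exact ⟨s ++ c :: (m ++ b :: a :: q),
      by simpa using swap_mem_oneT (s ++ c :: m) q a b,
      by simpa using del_mem_delBall s (m ++ b :: a :: q) c⟩
  · subst hs
    match m, hm with
    | [], hm =>
      obtain rfl : a :: b :: q = t := by simpa using hm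
      exact ⟨p ++ c :: b :: a :: q,
        by simpa using swap_mem_oneT (p ++ [c]) q a b,
        by simpa using del_mem_delBall p (b :: a :: q) c⟩
    | [a'], hm =>
      obtain ⟨rfl, rfl⟩ : a = a' ∧ b :: q = t := by simpa using hm
      by_cases hab : a = b
      · subst hab
        exact ⟨p ++ [a] ++ c :: a :: q, oneT_self _,
          by simpa using del_mem_delBall (p ++ [a]) (a :: q) c⟩
      · have hc : c = a ∨ c = b := by revert hab; cases a <;> cases b <;> cases c <;> simp
        rcases hc with rfl | rfl
        · exact ⟨p ++ c :: b :: c :: q,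
            by simpa using swap_mem_oneT (p ++ [c]) q c b,
            by simpa using del_mem_delBall p (b :: c :: q) c⟩
        · exact ⟨p ++ c :: a :: c :: q,
            by simpa using swap_mem_oneT p (c :: q) a c,
            by simpa using del_mem_delBall (p ++ [c, a]) q c⟩
    | a' :: b' :: m', hm =>
      obtain ⟨rfl, rfl, rfl⟩ : a = a' ∧ b = b' ∧ q = m' ++ t := by simpa using hm
      exact ⟨p ++ b :: a :: m' ++ c :: t,
        by simpa using swap_mem_oneT p (m' ++ c :: t) a b,
        by simpa using del_mem_delBall (p ++ b :: a :: m') t c⟩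

lemma liftA : ∀ (ℓ : ℕ) {x z w : List Bool}, z ∈ ballT ℓ x → w ∈ delBall z →
    ∃ w', w' ∈ delBall x ∧ w ∈ ballT ℓ w'
  | 0, x, z, w, hz, hw => by
    obtain rfl : z = x := hz
    exact ⟨w, hw, rfl⟩
  | (ℓ + 1), x, z, w, hz, hw => by
    obtain ⟨y, hy, hzy⟩ := Set.mem_iUnion₂.mp hz
    obtain ⟨v, hv, hwv⟩ := stepA hzy hw
    obtain ⟨w', hw', hvw'⟩ := liftA ℓ hy hv
    exact ⟨w', hw', Set.mem_iUnion₂.mpr ⟨v, hvw', hwv⟩⟩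

lemma liftB : ∀ (ℓ : ℕ) {x z w : List Bool}, z ∈ delBall x → w ∈ ballT ℓ z →
    ∃ u, u ∈ ballT ℓ x ∧ w ∈ delBall u
  | 0, x, z, w, hz, hw => by
    obtain rfl : w = z := hw
    exact ⟨x, rfl, hz⟩
  | (ℓ + 1), x, z, w, hz, hw => by
    obtain ⟨y, hy, hwy⟩ := Set.mem_iUnion₂.mp hw
    obtain ⟨u, hu, hyu⟩ := liftB ℓ hz hy
    obtain ⟨v, hv, hwv⟩ := stepB hyu hwy
    exact ⟨v, Set.mem_iUnion₂.mpr ⟨u, hu, hv⟩, hwv⟩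

theorem del_transL_commute (x : List Bool) (ℓ : ℕ) (hℓ : 1 ≤ ℓ) :
    (⋃ z ∈ ballT ℓ x, delBall z) = ⋃ z ∈ delBall x, ballT ℓ z := by
  ext w
  simp only [Set.mem_iUnion, exists_prop]
  constructor
  · rintro ⟨z, hz, hw⟩
    obtain ⟨w', h1, h2⟩ := liftA ℓ hz hw
    exact ⟨w', h1, h2⟩
  · rintro ⟨z, hz, hw⟩
    obtain ⟨u, h1, h2⟩ := liftB ℓ hz hw
    exact ⟨u, h1, h2⟩
end

section
/- Let t ≤ b be odd with b ≥ 5, let v_1, v_2 ∈ F_2^t with wt(v_1) = wt(v_2), let y ∈ F_2^{n−t}, and let i_1 < i_2 with i_2 − i_1 ≥ b^4·log n. Suppose x = I(y, v_1, i_1) lies in Bal(n,b) and satisfies Σ i·x_i ≡ a (mod bn + b^2). Then z = I(y, v_2, i_2) satisfies Σ_{i=1}^n i·z_i − Σ_{i=1}^n i·x_i ≢ 0 (mod bn + b^2); hence z does not satisfy the same VT congruence. -/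
/-- The VT syndrome Σ_{i=1}^m i·x_i of a binary word, over the integers. -/
def listSynd (x : List Bool) : ℤ :=
  ∑ i ∈ Finset.range x.length, ((i : ℤ) + 1) * (if x.getD i false then 1 else 0)

lemma count_true_eq_sum (l : List Bool) :
    (l.count true : ℤ) = ∑ i ∈ Finset.range l.length, (if l.getD i false then 1 else 0) := by
  induction l with
  | nil => simp
  | cons c l ih =>
    rw [List.length_cons, Finset.sum_range_succ']
    simp only [List.getD_cons_succ, List.getD_cons_zero, ← ih, List.count_cons]
    cases c <;> simp

lemma listSynd_cons (c : Bool) (l : List Bool) :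
    listSynd (c :: l) = (if c then 1 else 0) + (l.count true : ℤ) + listSynd l := by
  unfold listSynd
  rw [List.length_cons, Finset.sum_range_succ']
  simp only [List.getD_cons_succ, List.getD_cons_zero]
  rw [count_true_eq_sum]
  push_cast
  have : ∀ i ∈ Finset.range l.length,
      ((i : ℤ) + 1 + 1) * (if l.getD i false then 1 else 0)
      = ((i : ℤ) + 1) * (if l.getD i false then 1 else 0)
        + (if l.getD i false then (1:ℤ) else 0) := fun i _ => by ring
  rw [Finset.sum_congr rfl this, Finset.sum_add_distrib]
  ring

lemma listSynd_append (a c : List Bool) :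
    listSynd (a ++ c) = listSynd a + (a.length : ℤ) * c.count true + listSynd c := by
  induction a with
  | nil => simp [listSynd]
  | cons x a ih =>
    rw [List.cons_append, listSynd_cons, ih, listSynd_cons, List.count_append,
      List.length_cons]
    push_cast
    ring

lemma count_le_listSynd (l : List Bool) : (l.count true : ℤ) ≤ listSynd l := by
  rw [count_true_eq_sum]
  apply Finset.sum_le_sum
  intro i hi
  by_cases h : l.getD i false = true
  · simp only [if_pos h]; nlinarith [Int.ofNat_nonneg i]
  · simp only [if_neg h]; simp

lemma listSynd_le (l : List Bool) : listSynd l ≤ (l.length : ℤ) * l.count true := by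
  rw [count_true_eq_sum, Finset.mul_sum]
  apply Finset.sum_le_sum
  intro i hi
  by_cases h : l.getD i false = true
  · simp only [if_pos h, mul_one]
    exact_mod_cast Nat.succ_le_of_lt (Finset.mem_range.mp hi)
  · simp only [if_neg h, mul_zero]; exact le_refl 0

/-- `insertAt y v j` inserts the block `v` into `y` at (0-indexed) position `j`. -/
def insertAt (y v : List Bool) (j : ℕ) : List Bool :=
  y.take j ++ v ++ y.drop j

/-- Membership in the balanced set Bal(n,b). -/
def memBal (n b : ℕ) (x : List Bool) : Prop :=
  x.length = n ∧
  ∀ B j : ℕ, B ≤ n → ((b : ℝ) ^ 4 * Real.logb 2 n ≤ (B : ℝ)) → j + B ≤ n →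
    ((B : ℝ) / 2 - (B : ℝ) / (3 * b) < (((x.drop j).take B).count true : ℝ) ∧
     (((x.drop j).take B).count true : ℝ) < (B : ℝ) / 2 + (B : ℝ) / (3 * b))

set_option maxHeartbeats 2000000 in
theorem burst_VT_syndromes_differ (n b t : ℕ) (hb : 5 ≤ b) (ht : t ≤ b)
    (htodd : Odd t) (a : ℤ)
    (v₁ v₂ y : List Bool) (hv₁ : v₁.length = t) (hv₂ : v₂.length = t)
    (hw : v₁.count true = v₂.count true) (hy : y.length = n - t)
    (i₁ i₂ : ℕ) (h₁₂ : i₁ < i₂) (h₂ : i₂ ≤ y.length)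
    (hgap : (b : ℝ) ^ 4 * Real.logb 2 n ≤ ((i₂ : ℝ) - i₁))
    (hxBal : memBal n b (insertAt y v₁ i₁))
    (hxVT : listSynd (insertAt y v₁ i₁) ≡ a [ZMOD ((b : ℤ) * n + (b : ℤ) ^ 2)]) :
    ¬ listSynd (insertAt y v₂ i₂) ≡ listSynd (insertAt y v₁ i₁)
        [ZMOD ((b : ℤ) * n + (b : ℤ) ^ 2)] := by
  intro hcon
  obtain ⟨hxlen, hbal⟩ := hxBal
  have hi₁ : i₁ ≤ y.length := le_of_lt (lt_of_lt_of_le h₁₂ h₂)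
  have ht2 : t % 2 = 1 := Nat.odd_iff.mp htodd
  have ht1 : 1 ≤ t := by omega
  -- basic lengths
  have hn : n = y.length + t := by
    rw [← hxlen]
    simp only [insertAt, List.length_append, List.length_take, List.length_drop, hv₁]
    omega
  set B : ℕ := i₂ - i₁ with hBdef
  have hiB : i₂ = i₁ + B := by omega
  have hn2 : 2 ≤ n := by omega
  -- split of y
  have hs1 : y.drop i₁ = (y.drop i₁).take B ++ y.drop i₂ := by
    have h := List.take_append_drop B (y.drop i₁)
    rw [List.drop_drop, ← hiB] at h
    exact h.symm
  have hs2 : y.take i₂ = y.take i₁ ++ (y.drop i₁).take B := by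
    rw [hiB, List.take_add]
  have hyt : (y.take i₁).length = i₁ := by
    rw [List.length_take]; omega
  have hsl : ((y.drop i₁).take B).length = B := by
    rw [List.length_take, List.length_drop]; omega
  -- the key syndrome difference identity
  have key : listSynd (insertAt y v₂ i₂) - listSynd (insertAt y v₁ i₁)
      = (B : ℤ) * (v₁.count true) - (t : ℤ) * (((y.drop i₁).take B).count true)
        + (listSynd v₂ - listSynd v₁) := by
    unfold insertAt
    rw [hs2]
    conv_lhs => rw [hs1]
    rw [listSynd_append, listSynd_append, listSynd_append, listSynd_append,
      listSynd_append, listSynd_append]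
    simp only [List.take_left' hsl, List.count_append, List.length_append, hyt, hsl,
      hv₁, hv₂, ← hw]
    push_cast
    ring
  -- notation
  set w : ℕ := v₁.count true with hwdef
  set w₂ : ℕ := ((y.drop i₁).take B).count true with hw2def
  set δ : ℤ := listSynd v₂ - listSynd v₁ with hδdef
  -- window of x
  have hxwin : ((insertAt y v₁ i₁).drop i₁).take (B + t) = v₁ ++ (y.drop i₁).take B := by
    unfold insertAt
    rw [List.append_assoc, List.drop_left' hyt]
    conv_lhs => rw [hs1, show B + t = v₁.length + B by rw [hv₁]; omega,
      List.take_length_add_append]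
    rw [List.take_left' hsl]
  -- apply balance
  have hb0 : (0:ℝ) < b := by exact_mod_cast (show 0 < b by omega)
  have hlog : (1:ℝ) ≤ Real.logb 2 n := by
    rw [show (1:ℝ) = Real.logb 2 2 from (Real.logb_self_eq_one (by norm_num)).symm]
    exact Real.logb_le_logb_of_le (by norm_num) (by norm_num) (by exact_mod_cast hn2)
  have hB4 : b ^ 4 ≤ B := by
    have h1 : ((b:ℝ))^4 ≤ ((B:ℕ) : ℝ) := by
      calc ((b:ℝ))^4 = (b:ℝ)^4 * 1 := by ring
        _ ≤ (b:ℝ)^4 * Real.logb 2 n := by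
            apply mul_le_mul_of_nonneg_left hlog (by positivity)
        _ ≤ (i₂ : ℝ) - i₁ := hgap
        _ = ((B:ℕ) : ℝ) := by rw [hBdef]; push_cast [Nat.cast_sub h₁₂.le]; ring
    exact_mod_cast h1
  have hwin := hbal (B + t) i₁ (by omega)
    (by
      push_cast
      calc (b:ℝ)^4 * Real.logb 2 n ≤ (i₂ : ℝ) - i₁ := hgap
        _ ≤ (B:ℝ) + t := by
            rw [hBdef]; push_cast [Nat.cast_sub h₁₂.le]
            have : (0:ℝ) ≤ t := by positivity
            linarith)
    (by omega)
  rw [hxwin, List.count_append] at hwin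
  obtain ⟨hwin1, hwin2⟩ := hwin
  -- convert balance bounds to ℕ
  have h3b : (0:ℝ) < 3 * b := by linarith
  have hmul : ∀ K c : ℕ, ((K:ℝ)/2 + K/(3*b) < c → 3*b*K + 2*K < 6*b*c)
      ∧ ((c:ℝ) < K/2 + K/(3*b) → 6*b*c < 3*b*K + 2*K) := by
    intro K c
    constructor
    · intro h
      have h' := mul_lt_mul_of_pos_right h (show (0:ℝ) < 6*b by linarith)
      have he : ((K:ℝ)/2 + K/(3*b)) * (6*b) = 3*b*K + 2*K := by
        field_simp; ring
      rw [he] at h'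
      have : (3*(b:ℝ)*K + 2*K : ℝ) < 6*b*c := by linarith
      exact_mod_cast this
    · intro h
      have h' := mul_lt_mul_of_pos_right h (show (0:ℝ) < 6*b by linarith)
      have he : ((K:ℝ)/2 + K/(3*b)) * (6*b) = 3*b*K + 2*K := by
        field_simp; ring
      rw [he] at h'
      have : (6*(b:ℝ)*c : ℝ) < 3*b*K + 2*K := by linarith
      exact_mod_cast this
  have hA1 : 6*b*(w + w₂) < 3*b*(B+t) + 2*(B+t) := by
    apply (hmul (B+t) (w+w₂)).2
    push_cast at hwin2 ⊢
    linarith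
  have hA2 : 3*b*(B+t) < 6*b*(w + w₂) + 2*(B+t) := by
    have h := (hmul (B+t) (w+w₂)).1
    -- from hwin1 : K/2 - K/(3b) < w+w₂, i.e. K/2 + K/(3b) < w+w₂ + 2*(K/(3b))
    -- handle directly instead
    have h' := mul_lt_mul_of_pos_right hwin1 (show (0:ℝ) < 6*b by linarith)
    have he : (((B+t : ℕ):ℝ)/2 - ((B+t:ℕ):ℝ)/(3*b)) * (6*b)
        = 3*b*((B+t:ℕ):ℝ) - 2*((B+t:ℕ):ℝ) := by field_simp; ring
    rw [he] at h'
    have hc : (3*(b:ℝ)*((B+t:ℕ):ℝ) : ℝ) < 6*b*((w+w₂:ℕ):ℝ) + 2*((B+t:ℕ):ℝ) := by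
      push_cast at h' ⊢
      linarith
    exact_mod_cast hc
  clear_value B w w₂ δ
  -- integer facts
  have c1 : (6:ℤ)*b*((w:ℤ)+w₂) < 3*b*((B:ℤ)+t) + 2*((B:ℤ)+t) := by exact_mod_cast hA1
  have c2 : (3:ℤ)*b*((B:ℤ)+t) < 6*b*((w:ℤ)+w₂) + 2*((B:ℤ)+t) := by exact_mod_cast hA2
  have cB4 : ((b:ℤ))^4 ≤ (B:ℤ) := by exact_mod_cast hB4
  have cwt : (w:ℤ) ≤ t := by
    have : w ≤ t := by rw [hwdef, ← hv₁]; exact List.count_le_length (a := true) (l := v₁)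
    exact_mod_cast this
  have cw2 : (w₂:ℤ) ≤ B := by
    have h := List.count_le_length (a := true) (l := (y.drop i₁).take B)
    rw [hsl] at h
    have : w₂ ≤ B := by rw [hw2def]; exact h
    exact_mod_cast this
  have cBn : (B:ℤ) + t ≤ n := by exact_mod_cast (show B + t ≤ n by omega)
  have cb : (5:ℤ) ≤ b := by exact_mod_cast hb
  have ctb : (t:ℤ) ≤ b := by exact_mod_cast ht
  have ct1 : (1:ℤ) ≤ t := by exact_mod_cast ht1
  have cw0 : (0:ℤ) ≤ w := by positivity
  have cw20 : (0:ℤ) ≤ w₂ := by positivity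
  have cB0 : (0:ℤ) ≤ B := by positivity
  have cn0 : (0:ℤ) ≤ n := by positivity
  -- δ bounds
  have hs1v : (w : ℤ) ≤ listSynd v₁ := by
    rw [hwdef]; exact count_le_listSynd v₁
  have hs2v : (w : ℤ) ≤ listSynd v₂ := by
    rw [hw]; exact count_le_listSynd v₂
  have hs1v' : listSynd v₁ ≤ (t:ℤ) * w := by
    rw [hwdef]
    have h := listSynd_le v₁
    rw [hv₁] at h
    exact h
  have hs2v' : listSynd v₂ ≤ (t:ℤ) * w := by
    rw [hw]
    have h := listSynd_le v₂
    rw [hv₂] at h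
    exact h
  have haux1 : (0:ℤ) ≤ ((t:ℤ)-w)*((t:ℤ)-1) :=
    mul_nonneg (by linarith) (by linarith)
  have haux2 : (0:ℤ) ≤ ((b:ℤ)-t)*((b:ℤ)+t-1) :=
    mul_nonneg (by linarith) (by linarith)
  have hδ1 : δ ≤ (b:ℤ)^2 - b := by
    have h1 : δ ≤ (t:ℤ)*w - w := by rw [hδdef]; linarith [hs1v, hs2v']
    linarith only [h1, haux1, haux2]
  have hδ2 : -((b:ℤ)^2 - b) ≤ δ := by
    have h1 : (w:ℤ) - t*w ≤ δ := by rw [hδdef]; linarith [hs2v, hs1v']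
    linarith only [h1, haux1, haux2]
  have hb6 : (0:ℤ) < 6*b := by linarith
  have hp6 : 25*(b:ℤ)^3 ≤ b^5 := by
    have e : (0:ℤ) ≤ (b:ℤ)^3*(((b:ℤ)-5)*((b:ℤ)+5)) :=
      mul_nonneg (by positivity) (mul_nonneg (by linarith) (by linarith))
    linarith only [e]
  have hbt : (0:ℤ) ≤ (b:ℤ)*t := mul_nonneg (by linarith) (by linarith)
  have hb3 : (0:ℤ) < (b:ℤ)^3 := by positivity
  have hb2 : (0:ℤ) ≤ (b:ℤ)^2 := by positivity
  -- nonvanishing of the difference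
  have hne : (B:ℤ)*w - (t:ℤ)*w₂ + δ ≠ 0 := by
    rcases (show t + 1 ≤ 2*w ∨ 2*w + 1 ≤ t by omega) with hcase | hcase
    · -- positive case
      have hc : (t:ℤ) + 1 ≤ 2*w := by exact_mod_cast hcase
      have hp1 : (t:ℤ) * (6*b*((w:ℤ)+w₂)) < t * (3*b*((B:ℤ)+t) + 2*((B:ℤ)+t)) :=
        mul_lt_mul_of_pos_left c1 (by linarith)
      have hp2 : (0:ℤ) ≤ 3*(b:ℤ)*(((B:ℤ)+t)*(2*w - (t+1))) := by
        apply mul_nonneg (by linarith)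
        apply mul_nonneg (by linarith) (by linarith)
      have hp3 : (0:ℤ) ≤ 2*(((B:ℤ)+t)*((b:ℤ) - t)) := by
        apply mul_nonneg (by linarith)
        apply mul_nonneg (by linarith) (by linarith)
      have hp4 : (b:ℤ)*(b^4) ≤ b*B := by
        apply mul_le_mul_of_nonneg_left cB4 (by linarith)
      have hp5 : (0:ℤ) ≤ 6*(b:ℤ)*(δ + ((b:ℤ)^2 - b)) := by
        apply mul_nonneg (by linarith) (by linarith)
      have big : 0 < 6*(b:ℤ)*((B:ℤ)*w - (t:ℤ)*w₂ + δ) := by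
        linarith only [hp1, hp2, hp3, hp4, hp5, hp6, hbt, hb3, hb2]
      rcases mul_pos_iff.mp big with ⟨_, h⟩ | ⟨h, _⟩
      · exact h.ne'
      · linarith
      
    · -- negative case
      have hc : 2*(w:ℤ) + 1 ≤ t := by exact_mod_cast hcase
      have hq1 : (t:ℤ) * (3*b*((B:ℤ)+t)) < t * (6*b*((w:ℤ)+w₂) + 2*((B:ℤ)+t)) :=
        mul_lt_mul_of_pos_left c2 (by linarith)
      have hp2 : (0:ℤ) ≤ 3*(b:ℤ)*(((B:ℤ)+t)*((t - 1) - 2*w)) := by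
        apply mul_nonneg (by linarith)
        apply mul_nonneg (by linarith) (by linarith)
      have hp3 : (0:ℤ) ≤ 2*(((B:ℤ)+t)*((b:ℤ) - t)) := by
        apply mul_nonneg (by linarith)
        apply mul_nonneg (by linarith) (by linarith)
      have hp4 : (b:ℤ)*(b^4) ≤ b*B := by
        apply mul_le_mul_of_nonneg_left cB4 (by linarith)
      have hp5 : (0:ℤ) ≤ 6*(b:ℤ)*(((b:ℤ)^2 - b) - δ) := by
        apply mul_nonneg (by linarith) (by linarith)
      have big : 6*(b:ℤ)*((B:ℤ)*w - (t:ℤ)*w₂ + δ) < 0 := by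
        linarith only [hq1, hp2, hp3, hp4, hp5, hp6, hbt, hb3, hb2]
      rcases mul_neg_iff.mp big with ⟨_, h⟩ | ⟨h, _⟩
      · exact h.ne
      · linarith
      
  -- size bound
  have cB_n : (B:ℤ) ≤ n := by linarith
  have hr1 : (B:ℤ)*w ≤ (B:ℤ)*t := mul_le_mul_of_nonneg_left cwt cB0
  have hr2 : (B:ℤ)*t ≤ (n:ℤ)*b := mul_le_mul cB_n ctb (by linarith) cn0
  have hr3 : (0:ℤ) ≤ (t:ℤ)*w₂ := mul_nonneg (by linarith) cw20
  have hr4 : (t:ℤ)*w₂ ≤ (b:ℤ)*B := mul_le_mul ctb cw2 cw20 (by linarith)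
  have hr5 : (b:ℤ)*B ≤ (b:ℤ)*n := mul_le_mul_of_nonneg_left cB_n (by linarith)
  have hr6 : (0:ℤ) ≤ (B:ℤ)*w := mul_nonneg cB0 cw0
  have habs : |(B:ℤ)*w - (t:ℤ)*w₂ + δ| < (b:ℤ)*n + (b:ℤ)^2 := by
    rw [abs_lt]
    constructor
    · linarith only [hr4, hr5, hr6, hδ2, cb, cn0]
    · linarith only [hr1, hr2, hr3, hδ1, cb, cn0]
  -- conclusion
  have hdvd : ((b:ℤ)*n + (b:ℤ)^2) ∣ ((B:ℤ)*w - (t:ℤ)*w₂ + δ) := key ▸ hcon.symm.dvd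
  have hle := Int.le_of_dvd (abs_pos.mpr hne) ((dvd_abs _ _).mpr hdvd)
  linarith only [hle, habs]
end
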